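/- Let a countable group Γ act on a countable set I. If every orbit Γ·i is infinite, then for every finite subset F ⊂ I there exists g ∈ Γ with g·F ∩ F = ∅. -/
import Mathlib

open scoped Pointwise

/-- if a countable group `Γ` acts on a countable set `I` with all orbits
infinite, then every finite subset `F ⊆ I` can be moved completely off itself:
there is `g ∈ Γ` with `g·F ∩ F = ∅`. -/
theorem stmt_6 {Γ I : Type*} [Group Γ] [Countable Γ] [Countable I] [MulAction Γ I]
    (horb : ∀ i : I, (MulAction.orbit Γ i).Infinite) (F : Finset I) :
    ∃ g : Γ, ∀ i ∈ F, g • i ∉ F := by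
  classical
  by_contra h
  push_neg at h
  -- index: pairs (i,j) with some g moving i to j
  set s : Finset (I × I) := (F ×ˢ F).filter (fun p => ∃ g : Γ, g • p.1 = p.2) with hs
  have hgc : ∀ p ∈ s, ∃ g : Γ, g • p.1 = p.2 := fun p hp => (Finset.mem_filter.mp hp).2
  choose! gc hgc' using hgc
  have hcovers : ⋃ p ∈ s, (gc p) • ((MulAction.stabilizer Γ p.1 : Subgroup Γ) : Set Γ)
      = Set.univ := by
    ext g
    simp only [Set.mem_iUnion, Set.mem_univ, iff_true]
    obtain ⟨i, hiF, hgiF⟩ := h g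
    have hps : (i, g • i) ∈ s := by
      simp only [hs, Finset.mem_filter, Finset.mem_product]
      exact ⟨⟨hiF, hgiF⟩, g, rfl⟩
    refine ⟨(i, g • i), hps, ?_⟩
    have := hgc' _ hps
    rw [mem_leftCoset_iff, SetLike.mem_coe, MulAction.mem_stabilizer_iff, mul_smul,
      inv_smul_eq_iff]
    exact this.symm
  obtain ⟨p, hps, hfin⟩ := Subgroup.exists_finiteIndex_of_leftCoset_cover hcovers
  have : (MulAction.orbit Γ p.1).Finite := by
    have : Finite (Γ ⧸ MulAction.stabilizer Γ p.1) := @Subgroup.finite_quotient_of_finiteIndex _ _ _ hfin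
    exact Set.finite_coe_iff.mp (Finite.of_equiv _ (MulAction.orbitEquivQuotientStabilizer Γ p.1).symm)
  exact horb p.1 this
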